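/- Let n ≥ 3 and let f : Fin n → Fin n → Fin n → Fin n → Fin n → ℂ, written f^{ij}_{rst}, satisfy the symmetry f^{ij}_{rst} = f^{ij}_{srt} for all indices. Then there exists a unique pair of families A, B : Fin n → Fin n → Fin n → ℂ (written A^i_{rs} and B^j_{st}) satisfying: (i) Σ_i A^i_{is} = 0 for every s; (ii) A^i_{rs} − A^i_{sr} = (1/(n−2))·( conj(Σ_l B^l_{rl})·δ^i_s − conj(Σ_l B^l_{sl})·δ^i_r ) for all i, r, s; and (iii) the tensor P^{ij}_{rst} := f^{ij}_{rst} + A^i_{rs}·δ^j_t + conj(B^j_{rt})·δ^i_s + conj(B^j_{st})·δ^i_r + (1/(n−2))·Σ_l conj(B^l_{sl})·δ^j_t·δ^i_r satisfies Σ_j P^{ij}_{rsj} = 0 for all i, r, s and Σ_i P^{ij}_{ist} = 0 for all j, s, t. Moreover, for this unique choice, P^{ij}_{rst} = P^{ij}_{srt} (P is symmetric in r, s), so P is totally trace-free. (This is the normalization producing the fundamental curvature invariant of a free CR distribution of rank n ≥ 3.) -/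

import Mathlib

noncomputable section

/-- Kronecker delta on `Fin n`, valued in `ℂ`. -/
def kdelta {n : ℕ} (i j : Fin n) : ℂ := if i = j then 1 else 0

/-- The candidate curvature tensor
`P^{ij}_{rst} = f^{ij}_{rst} + A^i_{rs}·δ^j_t + conj(B^j_{rt})·δ^i_s
  + conj(B^j_{st})·δ^i_r + (1/(n−2))·Σ_l conj(B^l_{sl})·δ^j_t·δ^i_r`. -/
def Ptensor (n : ℕ) (f : Fin n → Fin n → Fin n → Fin n → Fin n → ℂ)
    (A B : Fin n → Fin n → Fin n → ℂ) :
    Fin n → Fin n → Fin n → Fin n → Fin n → ℂ :=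
  fun i j r s t =>
    f i j r s t + A i r s * kdelta j t
      + starRingEnd ℂ (B j r t) * kdelta i s
      + starRingEnd ℂ (B j s t) * kdelta i r
      + (1 / ((n : ℂ) - 2)) * (∑ l, starRingEnd ℂ (B l s l)) * kdelta j t * kdelta i r

/-- The normalization conditions (i), (ii), (iii) on the pair `(A, B)`:
(i) `A` is trace-free, `Σ_i A^i_{is} = 0`;
(ii) the antisymmetric part of `A` is determined by the traces of `B`;
(iii) the tensor `P` is trace-free in both indicated pairs of indices. -/
def NormCond (n : ℕ) (f : Fin n → Fin n → Fin n → Fin n → Fin n → ℂ)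
    (AB : (Fin n → Fin n → Fin n → ℂ) × (Fin n → Fin n → Fin n → ℂ)) : Prop :=
  (∀ s, ∑ i, AB.1 i i s = 0) ∧
  (∀ i r s, AB.1 i r s - AB.1 i s r =
    (1 / ((n : ℂ) - 2)) *
      (starRingEnd ℂ (∑ l, AB.2 l r l) * kdelta i s -
       starRingEnd ℂ (∑ l, AB.2 l s l) * kdelta i r)) ∧
  (∀ i r s, ∑ j, Ptensor n f AB.1 AB.2 i j r s j = 0) ∧
  (∀ j s t, ∑ i, Ptensor n f AB.1 AB.2 i j i s t = 0)

lemma kdelta_self {n : ℕ} (i : Fin n) : kdelta i i = 1 := if_pos rfl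

lemma sum_mul_kdelta {n : ℕ} (g : Fin n → ℂ) (s : Fin n) :
    ∑ i, g i * kdelta i s = g s := by
  simp [kdelta]

lemma sum_kdelta_diag (n : ℕ) : ∑ i : Fin n, kdelta i i = (n : ℂ) := by
  simp [kdelta]

def F1 (n : ℕ) (f : Fin n → Fin n → Fin n → Fin n → Fin n → ℂ) (i r s : Fin n) : ℂ :=
  ∑ j, f i j r s j

def F2 (n : ℕ) (f : Fin n → Fin n → Fin n → Fin n → Fin n → ℂ) (j s t : Fin n) : ℂ :=
  ∑ i, f i j i s t

def Gf (n : ℕ) (f : Fin n → Fin n → Fin n → Fin n → Fin n → ℂ) (s : Fin n) : ℂ :=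
  ∑ i, F1 n f i i s

def Ssol (n : ℕ) (f : Fin n → Fin n → Fin n → Fin n → Fin n → ℂ) (s : Fin n) : ℂ :=
  -(((n:ℂ)-2)/(2*(n:ℂ)^2 - (n:ℂ) - 2)) * Gf n f s

def Bsol (n : ℕ) (f : Fin n → Fin n → Fin n → Fin n → Fin n → ℂ) (j s t : Fin n) : ℂ :=
  starRingEnd ℂ (-(1/((n:ℂ)+1)) *
    (F2 n f j s t + (n:ℂ) * (1/((n:ℂ)-2)) * Ssol n f s * kdelta j t))

def Asol (n : ℕ) (f : Fin n → Fin n → Fin n → Fin n → Fin n → ℂ) (i r s : Fin n) : ℂ :=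
  -(1/(n:ℂ)) * (F1 n f i r s + Ssol n f r * kdelta i s
    + (1 + (n:ℂ)*(1/((n:ℂ)-2))) * Ssol n f s * kdelta i r)

-- nonzero facts
lemma hnc2 {n : ℕ} (hn : 3 ≤ n) : (n:ℂ) - 2 ≠ 0 := by
  have : (n:ℂ) ≠ 2 := by exact_mod_cast (by omega : n ≠ 2)
  exact sub_ne_zero.mpr this

lemma hnc0 {n : ℕ} (hn : 3 ≤ n) : (n:ℂ) ≠ 0 := by
  exact_mod_cast (by omega : n ≠ 0)

lemma hnc1 {n : ℕ} (hn : 3 ≤ n) : (n:ℂ) + 1 ≠ 0 := by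
  have : ((n+1 : ℕ):ℂ) ≠ 0 := by exact_mod_cast (by omega : n + 1 ≠ 0)
  push_cast at this; exact this

lemma hncD {n : ℕ} (hn : 3 ≤ n) : 2*(n:ℂ)^2 - (n:ℂ) - 2 ≠ 0 := by
  have hle : n + 2 ≤ 2*n^2 := by nlinarith
  have h1 : ((2*n^2 - (n+2) : ℕ) : ℂ) = 2*(n:ℂ)^2 - (n:ℂ) - 2 := by
    push_cast [hle]; ring
  rw [← h1]
  exact_mod_cast Nat.sub_ne_zero_of_lt (by nlinarith : n + 2 < 2*n^2)

lemma hncD' {n : ℕ} (hn : 3 ≤ n) : (-2 - (n:ℂ) + (n:ℂ)^2*2) ≠ 0 := by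
  have := hncD hn
  contrapose! this
  linear_combination this

lemma traceJ (n : ℕ) (f : Fin n → Fin n → Fin n → Fin n → Fin n → ℂ)
    (A B : Fin n → Fin n → Fin n → ℂ) (i r s : Fin n) :
    ∑ j, Ptensor n f A B i j r s j =
      F1 n f i r s + (n:ℂ) * A i r s
        + (∑ j, starRingEnd ℂ (B j r j)) * kdelta i s
        + (∑ j, starRingEnd ℂ (B j s j)) * kdelta i r
        + (1/((n:ℂ)-2)) * (∑ l, starRingEnd ℂ (B l s l)) * (n:ℂ) * kdelta i r := by
  have e1 : ∑ j : Fin n, A i r s * kdelta j j = (n:ℂ) * A i r s := by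
    simp [kdelta_self, Finset.sum_const, Fintype.card_fin, nsmul_eq_mul]
  have e2 : ∑ j : Fin n, starRingEnd ℂ (B j r j) * kdelta i s
      = (∑ j, starRingEnd ℂ (B j r j)) * kdelta i s := (Finset.sum_mul _ _ _).symm
  have e3 : ∑ j : Fin n, starRingEnd ℂ (B j s j) * kdelta i r
      = (∑ j, starRingEnd ℂ (B j s j)) * kdelta i r := (Finset.sum_mul _ _ _).symm
  have e4 : ∑ j : Fin n, (1/((n:ℂ)-2)) * (∑ l, starRingEnd ℂ (B l s l)) * kdelta j j * kdelta i r
      = (1/((n:ℂ)-2)) * (∑ l, starRingEnd ℂ (B l s l)) * (n:ℂ) * kdelta i r := by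
    simp [kdelta_self, Finset.sum_const, Fintype.card_fin, nsmul_eq_mul]
    ring
  simp only [Ptensor, Finset.sum_add_distrib, e1, e2, e3, e4]
  rfl

lemma traceI (n : ℕ) (f : Fin n → Fin n → Fin n → Fin n → Fin n → ℂ)
    (A B : Fin n → Fin n → Fin n → ℂ) (j s t : Fin n) :
    ∑ i, Ptensor n f A B i j i s t =
      F2 n f j s t + (∑ i, A i i s) * kdelta j t
        + starRingEnd ℂ (B j s t)
        + (n:ℂ) * starRingEnd ℂ (B j s t)
        + (1/((n:ℂ)-2)) * (∑ l, starRingEnd ℂ (B l s l)) * kdelta j t * (n:ℂ) := by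
  have e1 : ∑ i : Fin n, A i i s * kdelta j t = (∑ i, A i i s) * kdelta j t :=
    (Finset.sum_mul _ _ _).symm
  have e2 : ∑ i : Fin n, starRingEnd ℂ (B j i t) * kdelta i s = starRingEnd ℂ (B j s t) :=
    sum_mul_kdelta (fun i => starRingEnd ℂ (B j i t)) s
  have e3 : ∑ i : Fin n, starRingEnd ℂ (B j s t) * kdelta i i = (n:ℂ) * starRingEnd ℂ (B j s t) := by
    simp [kdelta_self, Finset.sum_const, Fintype.card_fin, nsmul_eq_mul]
  have e4 : ∑ i : Fin n, (1/((n:ℂ)-2)) * (∑ l, starRingEnd ℂ (B l s l)) * kdelta j t * kdelta i i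
      = (1/((n:ℂ)-2)) * (∑ l, starRingEnd ℂ (B l s l)) * kdelta j t * (n:ℂ) := by
    simp [kdelta_self, Finset.sum_const, Fintype.card_fin, nsmul_eq_mul]
    ring
  simp only [Ptensor, Finset.sum_add_distrib, e1, e2, e3, e4]
  rfl

lemma Gf_eq_sumF2 (n : ℕ) (f : Fin n → Fin n → Fin n → Fin n → Fin n → ℂ) (s : Fin n) :
    ∑ t, F2 n f t s t = Gf n f s := by
  unfold F2 Gf F1
  exact Finset.sum_comm

lemma conj_Bsol (n : ℕ) (f : Fin n → Fin n → Fin n → Fin n → Fin n → ℂ) (j s t : Fin n) :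
    starRingEnd ℂ (Bsol n f j s t) =
      -(1/((n:ℂ)+1)) * (F2 n f j s t + (n:ℂ) * (1/((n:ℂ)-2)) * Ssol n f s * kdelta j t) := by
  simp [Bsol]

lemma sum_conj_Bsol {n : ℕ} (hn : 3 ≤ n) (f : Fin n → Fin n → Fin n → Fin n → Fin n → ℂ)
    (s : Fin n) : ∑ l, starRingEnd ℂ (Bsol n f l s l) = Ssol n f s := by
  have : ∀ l : Fin n, starRingEnd ℂ (Bsol n f l s l) =
      -(1/((n:ℂ)+1)) * (F2 n f l s l + (n:ℂ) * (1/((n:ℂ)-2)) * Ssol n f s * kdelta l l) :=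
    fun l => conj_Bsol n f l s l
  rw [Finset.sum_congr rfl (fun l _ => this l), ← Finset.mul_sum, Finset.sum_add_distrib,
    Gf_eq_sumF2, ← Finset.mul_sum, sum_kdelta_diag]
  unfold Ssol
  field_simp [hnc1 hn, hnc2 hn, hncD hn]
  ring_nf; field_simp [hncD' hn]; ring

lemma sum_Asol_diag {n : ℕ} (hn : 3 ≤ n) (f : Fin n → Fin n → Fin n → Fin n → Fin n → ℂ)
    (s : Fin n) : ∑ i, Asol n f i i s = 0 := by
  unfold Asol
  rw [← Finset.mul_sum, Finset.sum_add_distrib, Finset.sum_add_distrib,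
    sum_mul_kdelta (fun i => Ssol n f i) s, ← Finset.mul_sum, sum_kdelta_diag]
  have hGf : ∑ i, F1 n f i i s = Gf n f s := rfl
  rw [hGf]
  unfold Ssol
  field_simp [hnc0 hn, hnc1 hn, hnc2 hn, hncD hn]
  ring_nf; field_simp [hncD' hn]; ring

lemma F1_symm (n : ℕ) (f : Fin n → Fin n → Fin n → Fin n → Fin n → ℂ)
    (hf : ∀ i j r s t, f i j r s t = f i j s r t) (i r s : Fin n) :
    F1 n f i r s = F1 n f i s r :=
  Finset.sum_congr rfl fun j _ => hf i j r s j

lemma cond_ii_sol {n : ℕ} (hn : 3 ≤ n) (f : Fin n → Fin n → Fin n → Fin n → Fin n → ℂ)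
    (hf : ∀ i j r s t, f i j r s t = f i j s r t) (i r s : Fin n) :
    Asol n f i r s - Asol n f i s r =
      (1 / ((n : ℂ) - 2)) *
        (starRingEnd ℂ (∑ l, Bsol n f l r l) * kdelta i s -
         starRingEnd ℂ (∑ l, Bsol n f l s l) * kdelta i r) := by
  rw [map_sum, map_sum, sum_conj_Bsol hn f r, sum_conj_Bsol hn f s]
  unfold Asol
  rw [F1_symm n f hf i s r]
  field_simp [hnc0 hn, hnc2 hn]
  ring

lemma cond_iii1_sol {n : ℕ} (hn : 3 ≤ n) (f : Fin n → Fin n → Fin n → Fin n → Fin n → ℂ)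
    (i r s : Fin n) : ∑ j, Ptensor n f (Asol n f) (Bsol n f) i j r s j = 0 := by
  rw [traceJ, sum_conj_Bsol hn f r, sum_conj_Bsol hn f s]
  unfold Asol
  field_simp [hnc0 hn, hnc2 hn]
  ring

lemma cond_iii2_sol {n : ℕ} (hn : 3 ≤ n) (f : Fin n → Fin n → Fin n → Fin n → Fin n → ℂ)
    (j s t : Fin n) : ∑ i, Ptensor n f (Asol n f) (Bsol n f) i j i s t = 0 := by
  rw [traceI, sum_Asol_diag hn f s, sum_conj_Bsol hn f s, conj_Bsol]
  field_simp [hnc1 hn, hnc2 hn]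
  ring

lemma uniq {n : ℕ} (hn : 3 ≤ n) (f : Fin n → Fin n → Fin n → Fin n → Fin n → ℂ)
    (AB : (Fin n → Fin n → Fin n → ℂ) × (Fin n → Fin n → Fin n → ℂ))
    (hAB : NormCond n f AB) : AB = (Asol n f, Bsol n f) := by
  obtain ⟨h1, h2, h3, h4⟩ := hAB
  have keyS : ∀ s, ((n:ℂ)+1) * Ssol n f s + (1/((n:ℂ)-2)) * Ssol n f s * (n:ℂ) * (n:ℂ)
      = -Gf n f s := by
    intro s; unfold Ssol; field_simp [hnc1 hn, hnc2 hn, hncD hn]; ring_nf; field_simp [hncD' hn]; ring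
  have hE : ∀ j s t, F2 n f j s t + ((n:ℂ)+1) * starRingEnd ℂ (AB.2 j s t)
      + (1/((n:ℂ)-2)) * (∑ l, starRingEnd ℂ (AB.2 l s l)) * kdelta j t * (n:ℂ) = 0 := by
    intro j s t
    have h := h4 j s t
    rw [traceI, h1 s] at h
    linear_combination h
  have hSB : ∀ s, (∑ l, starRingEnd ℂ (AB.2 l s l)) = Ssol n f s := by
    intro s
    have h5 : ∑ t, (F2 n f t s t + ((n:ℂ)+1) * starRingEnd ℂ (AB.2 t s t)
        + (1/((n:ℂ)-2)) * (∑ l, starRingEnd ℂ (AB.2 l s l)) * kdelta t t * (n:ℂ)) = 0 :=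
      Finset.sum_eq_zero fun t _ => hE t s t
    have e4 : ∑ t : Fin n, (1/((n:ℂ)-2)) * (∑ l, starRingEnd ℂ (AB.2 l s l)) * kdelta t t * (n:ℂ)
        = (1/((n:ℂ)-2)) * (∑ l, starRingEnd ℂ (AB.2 l s l)) * (n:ℂ) * (n:ℂ) := by
      simp [kdelta_self, Finset.sum_const, Fintype.card_fin, nsmul_eq_mul]; ring
    rw [Finset.sum_add_distrib, Finset.sum_add_distrib, Gf_eq_sumF2, ← Finset.mul_sum, e4] at h5
    have hK : (((n:ℂ)+1) + (1/((n:ℂ)-2)) * (n:ℂ) * (n:ℂ)) ≠ 0 := by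
      intro hc
      have key : ((n:ℂ)-2) * (((n:ℂ)+1) + (1/((n:ℂ)-2)) * (n:ℂ) * (n:ℂ))
          = 2*(n:ℂ)^2 - (n:ℂ) - 2 := by
        field_simp [hnc2 hn]; ring
      rw [hc, mul_zero] at key
      exact hncD hn key.symm
    have hzero : (((n:ℂ)+1) + (1/((n:ℂ)-2)) * (n:ℂ) * (n:ℂ))
        * ((∑ l, starRingEnd ℂ (AB.2 l s l)) - Ssol n f s) = 0 := by
      linear_combination h5 - keyS s
    exact sub_eq_zero.mp ((mul_eq_zero.mp hzero).resolve_left hK)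
  have hB : AB.2 = Bsol n f := by
    funext j s t
    apply RingHom.injective (starRingEnd ℂ)
    have e := hE j s t
    rw [hSB s] at e
    rw [conj_Bsol]
    field_simp [hnc1 hn, hnc2 hn] at e ⊢
    linear_combination e
  have hA : AB.1 = Asol n f := by
    funext i r s
    have h := h3 i r s
    rw [traceJ, hSB r, hSB s] at h
    unfold Asol
    field_simp [hnc0 hn, hnc2 hn] at h ⊢
    linear_combination h
  exact Prod.ext hA hB


/-- for `n ≥ 3` and `f` symmetric in the indices `r, s`, there is
a unique pair `(A, B)` satisfying the normalization conditions, and for this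
choice the resulting totally trace-free tensor `P` is symmetric in `r, s`. -/
theorem fundamental_invariant_normalization (n : ℕ) (hn : 3 ≤ n)
    (f : Fin n → Fin n → Fin n → Fin n → Fin n → ℂ)
    (hf : ∀ i j r s t, f i j r s t = f i j s r t) :
    (∃! AB : (Fin n → Fin n → Fin n → ℂ) × (Fin n → Fin n → Fin n → ℂ),
      NormCond n f AB) ∧
    (∀ AB : (Fin n → Fin n → Fin n → ℂ) × (Fin n → Fin n → Fin n → ℂ),
      NormCond n f AB →
      ∀ i j r s t, Ptensor n f AB.1 AB.2 i j r s t = Ptensor n f AB.1 AB.2 i j s r t) := by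
  constructor
  · refine ⟨(Asol n f, Bsol n f),
      ⟨fun s => sum_Asol_diag hn f s, fun i r s => cond_ii_sol hn f hf i r s,
       fun i r s => cond_iii1_sol hn f i r s, fun j s t => cond_iii2_sol hn f j s t⟩,
      fun AB h => uniq hn f AB h⟩
  · intro AB h i j r s t
    obtain ⟨h1, h2, h3, h4⟩ := h
    have hii := h2 i r s
    rw [map_sum, map_sum] at hii
    simp only [Ptensor]
    linear_combination hf i j r s t + kdelta j t * hii
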